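/- Under independent sampling without replacement (inclusion probabilities pᵢ), the ES condition holds with A = maxᵢ (1−pᵢ)Lᵢ/(pᵢ n), B = 1, C = 2AΔ. -/

import Mathlib

open MeasureTheory ProbabilityTheory
open scoped RealInnerProductSpace

lemma grad_sq_le_aux {E : Type*} [NormedAddCommGroup E] [InnerProductSpace ℝ E]
    [CompleteSpace E] (f : E → ℝ) (L m : ℝ) (hL : 0 < L)
    (hdiff : ∀ x, DifferentiableAt ℝ f x)
    (hlip : ∀ x y, ‖gradient f x - gradient f y‖ ≤ L * ‖x - y‖)
    (hb : ∀ x, m ≤ f x) (x : E) :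
    ‖gradient f x‖ ^ 2 ≤ 2 * L * (f x - m) := by
  have key : ∀ u : E, f (x + u) ≤ f x + ⟪gradient f x, u⟫ + L / 2 * ‖u‖ ^ 2 := by
    intro u
    set g : ℝ → ℝ := fun t => f (x + t • u) - t * ⟪gradient f x, u⟫ - L / 2 * t ^ 2 * ‖u‖ ^ 2
      with hg
    have hderiv : ∀ t : ℝ, HasDerivAt g
        (⟪gradient f (x + t • u), u⟫ - ⟪gradient f x, u⟫ - L * t * ‖u‖ ^ 2) t := by
      intro t
      have hc : HasDerivAt (fun t : ℝ => x + t • u) u t := by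
        simpa using (((hasDerivAt_id t).smul_const u).const_add x)
      have hf : HasDerivAt (fun t : ℝ => f (x + t • u)) ⟪gradient f (x + t • u), u⟫ t := by
        have h1 : HasFDerivAt f
            (InnerProductSpace.toDual ℝ E (gradient f (x + t • u))) (x + t • u) :=
          (hdiff _).hasGradientAt.hasFDerivAt
        have h := h1.comp_hasDerivAt t hc
        simp only [InnerProductSpace.toDual_apply_apply] at h
        exact h
      have h2 : HasDerivAt (fun t : ℝ => t * ⟪gradient f x, u⟫) ⟪gradient f x, u⟫ t := by
        simpa using (hasDerivAt_id t).mul_const ⟪gradient f x, u⟫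
      have h3 : HasDerivAt (fun t : ℝ => L / 2 * t ^ 2 * ‖u‖ ^ 2) (L * t * ‖u‖ ^ 2) t := by
        have := ((hasDerivAt_pow 2 t).const_mul (L / 2)).mul_const (‖u‖ ^ 2)
        exact this.congr_deriv (by rw [show (2:ℕ) - 1 = 1 from rfl]; push_cast; ring)
      exact (hf.sub h2).sub h3
    have hanti : AntitoneOn g (Set.Icc (0:ℝ) 1) := by
      apply antitoneOn_of_deriv_nonpos (convex_Icc 0 1)
      · exact fun t _ => (hderiv t).continuousAt.continuousWithinAt
      · exact fun t _ => (hderiv t).differentiableAt.differentiableWithinAt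
      · intro t ht
        rw [interior_Icc] at ht
        rw [(hderiv t).deriv]
        have h1 : ⟪gradient f (x + t • u), u⟫ - ⟪gradient f x, u⟫
            = ⟪gradient f (x + t • u) - gradient f x, u⟫ := (inner_sub_left _ _ _).symm
        have h2 : ⟪gradient f (x + t • u) - gradient f x, u⟫ ≤
            ‖gradient f (x + t • u) - gradient f x‖ * ‖u‖ := real_inner_le_norm _ _
        have h3 : ‖gradient f (x + t • u) - gradient f x‖ ≤ L * ‖t • u‖ := by
          simpa using hlip (x + t • u) x
        have h4 : ‖t • u‖ = t * ‖u‖ := by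
          rw [norm_smul, Real.norm_eq_abs, abs_of_pos ht.1]
        rw [h1]
        have h5 : ⟪gradient f (x + t • u) - gradient f x, u⟫ ≤ L * t * ‖u‖ ^ 2 := by
          calc ⟪gradient f (x + t • u) - gradient f x, u⟫
              ≤ ‖gradient f (x + t • u) - gradient f x‖ * ‖u‖ := h2
            _ ≤ (L * ‖t • u‖) * ‖u‖ := mul_le_mul_of_nonneg_right h3 (norm_nonneg u)
            _ = L * t * ‖u‖ ^ 2 := by rw [h4]; ring
        linarith
    have h01 := hanti (Set.left_mem_Icc.2 zero_le_one) (Set.right_mem_Icc.2 zero_le_one)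
      zero_le_one
    simp only [hg, one_smul, zero_smul, add_zero, one_pow, one_mul, zero_mul, sub_zero,
      mul_zero, zero_pow] at h01
    linarith
  have hk := key (-(L⁻¹ • gradient f x))
  have hb' := hb (x + -(L⁻¹ • gradient f x))
  have e1 : ⟪gradient f x, -(L⁻¹ • gradient f x)⟫ = -(L⁻¹ * ‖gradient f x‖ ^ 2) := by
    rw [inner_neg_right, real_inner_smul_right, real_inner_self_eq_norm_sq]
  have e2 : ‖-(L⁻¹ • gradient f x)‖ ^ 2 = L⁻¹ ^ 2 * ‖gradient f x‖ ^ 2 := by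
    rw [norm_neg, norm_smul, Real.norm_eq_abs, abs_of_pos (inv_pos.2 hL), mul_pow]
  rw [e1, e2] at hk
  have hq : L / 2 * (L⁻¹ ^ 2 * ‖gradient f x‖ ^ 2) = L⁻¹ * ‖gradient f x‖ ^ 2 / 2 := by
    field_simp
  have h6 : L⁻¹ * ‖gradient f x‖ ^ 2 ≤ 2 * (f x - m) := by linarith
  calc ‖gradient f x‖ ^ 2 = L * (L⁻¹ * ‖gradient f x‖ ^ 2) := by field_simp
    _ ≤ L * (2 * (f x - m)) := mul_le_mul_of_nonneg_left h6 hL.le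
    _ = 2 * L * (f x - m) := by ring


theorem es_independent_sampling {Ω : Type*} [MeasureSpace Ω]
    [IsProbabilityMeasure (ℙ : Measure Ω)] {d n : ℕ} (hn : 0 < n)
    (p : Fin n → ℝ) (hp : ∀ i, 0 < p i) (hp1 : ∀ i, p i ≤ 1)
    (f : Fin n → EuclideanSpace ℝ (Fin d) → ℝ)
    (L : Fin n → ℝ) (hL : ∀ i, 0 < L i)
    (hdiff : ∀ i x, DifferentiableAt ℝ (f i) x)
    (hlip : ∀ i x y, ‖gradient (f i) x - gradient (f i) y‖ ≤ L i * ‖x - y‖)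
    (finf : Fin n → ℝ) (hbound : ∀ i x, finf i ≤ f i x)
    (F : EuclideanSpace ℝ (Fin d) → ℝ) (hF : ∀ x, F x = (n : ℝ)⁻¹ * ∑ i, f i x)
    (fstar : ℝ) (hfstar : ∀ x, fstar ≤ F x)
    (X : Fin n → Ω → Bool)
    (hmeas : ∀ i, Measurable (X i))
    (hindep : iIndepFun X ℙ)
    (hdist : ∀ i, ℙ {ω | X i ω = true} = ENNReal.ofReal (p i))
    (v : Fin n → Ω → ℝ)
    (hv : ∀ i ω, v i ω = (if X i ω then 1 else 0) / p i)
    (Δ A B C : ℝ)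
    (hΔ : Δ = (n : ℝ)⁻¹ * ∑ i, (fstar - finf i))
    (hA : A = Finset.univ.sup'
      (Finset.univ_nonempty_iff.mpr ⟨⟨0, hn⟩⟩)
      (fun i : Fin n => (1 - p i) * L i / (p i * n)))
    (hB : B = 1)
    (hC : C = 2 * A * Δ) :
    ∀ x, ∫ ω, ‖(n : ℝ)⁻¹ • ∑ i, v i ω • gradient (f i) x‖ ^ 2 ≤
      2 * A * (F x - fstar) + B * ‖gradient F x‖ ^ 2 + C := by
  intro x
  classical
  set a : Fin n → EuclideanSpace ℝ (Fin d) := fun i => gradient (f i) x with ha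
  have hn0 : (n : ℝ) ≠ 0 := Nat.cast_ne_zero.2 hn.ne'
  set S : Fin n → Set Ω := fun i => X i ⁻¹' {true} with hS
  have hSm : ∀ i, MeasurableSet (S i) := fun i => (hmeas i) (measurableSet_singleton true)
  have hvi : ∀ i, v i = (S i).indicator (fun _ => (p i)⁻¹) := by
    intro i; funext ω
    rw [hv]
    by_cases h : X i ω = true
    · simp [hS, Set.indicator_apply, h, div_eq_mul_inv]
    · simp [hS, Set.indicator_apply, h]
  have hPi : ∀ i, ℙ (S i) = ENNReal.ofReal (p i) := by
    intro i; rw [← hdist i]; rfl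
  have hprod : ∀ i j, (fun ω => v i ω * v j ω)
      = (S i ∩ S j).indicator (fun _ => (p i)⁻¹ * (p j)⁻¹) := by
    intro i j; funext ω
    rw [hvi i, hvi j]
    by_cases h1 : ω ∈ S i <;> by_cases h2 : ω ∈ S j <;>
      simp [Set.indicator_apply, h1, h2]
  have hint : ∀ i j, Integrable (fun ω => v i ω * v j ω) ℙ := by
    intro i j; rw [hprod]
    exact (integrable_const _).indicator ((hSm i).inter (hSm j))
  have hEij : ∀ i j, (∫ ω, v i ω * v j ω) = if i = j then (p i)⁻¹ else 1 := by
    intro i j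
    rw [hprod]
    rw [integral_indicator_const _ ((hSm i).inter (hSm j))]
    by_cases h : i = j
    · subst h
      rw [if_pos rfl, Set.inter_self, measureReal_def, hPi i, ENNReal.toReal_ofReal (hp i).le, smul_eq_mul]
      field_simp
    · rw [if_neg h]
      have hmm := (hindep.indepFun h).measure_inter_preimage_eq_mul {true} {true}
        (measurableSet_singleton true) (measurableSet_singleton true)
      have hm : ℙ (S i ∩ S j) = ENNReal.ofReal (p i) * ENNReal.ofReal (p j) := by
        rw [← hPi i, ← hPi j]; exact hmm
      rw [measureReal_def, hm, ENNReal.toReal_mul, ENNReal.toReal_ofReal (hp i).le,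
        ENNReal.toReal_ofReal (hp j).le, smul_eq_mul]
      field_simp [(hp i).ne', (hp j).ne']
  have hnorm : ∀ ω, ‖(n : ℝ)⁻¹ • ∑ i, v i ω • a i‖ ^ 2
      = ∑ i, ∑ j, ((n : ℝ)⁻¹ * (n : ℝ)⁻¹ * ⟪a i, a j⟫) * (v i ω * v j ω) := by
    intro ω
    rw [← real_inner_self_eq_norm_sq]
    simp only [real_inner_smul_left, real_inner_smul_right, sum_inner, inner_sum,
      Finset.mul_sum]
    exact Finset.sum_congr rfl fun i _ => Finset.sum_congr rfl fun j _ => by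
      rw [real_inner_comm (a j) (a i)]; ring
  have hintegral : (∫ ω, ‖(n : ℝ)⁻¹ • ∑ i, v i ω • a i‖ ^ 2)
      = ∑ i, ∑ j, ((n : ℝ)⁻¹ * (n : ℝ)⁻¹ * ⟪a i, a j⟫) * (if i = j then (p i)⁻¹ else 1) := by
    rw [integral_congr_ae (Filter.Eventually.of_forall hnorm)]
    rw [integral_finset_sum _ (fun i _ =>
      integrable_finset_sum _ (fun j _ => ((hint i j).const_mul _)))]
    refine Finset.sum_congr rfl fun i _ => ?_
    rw [integral_finset_sum _ (fun j _ => ((hint i j).const_mul _))]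
    refine Finset.sum_congr rfl fun j _ => ?_
    rw [MeasureTheory.integral_const_mul, hEij i j]
  have hsplit : ∑ i, ∑ j, ((n : ℝ)⁻¹ * (n : ℝ)⁻¹ * ⟪a i, a j⟫) * (if i = j then (p i)⁻¹ else 1)
      = (∑ i, ∑ j, (n : ℝ)⁻¹ * (n : ℝ)⁻¹ * ⟪a i, a j⟫)
        + ∑ i, (n : ℝ)⁻¹ * (n : ℝ)⁻¹ * ‖a i‖ ^ 2 * ((p i)⁻¹ - 1) := by
    rw [← Finset.sum_add_distrib]
    refine Finset.sum_congr rfl fun i _ => ?_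
    have hterm : ∀ j, ((n : ℝ)⁻¹ * (n : ℝ)⁻¹ * ⟪a i, a j⟫) * (if i = j then (p i)⁻¹ else 1)
        = (n : ℝ)⁻¹ * (n : ℝ)⁻¹ * ⟪a i, a j⟫
          + (if j = i then (n : ℝ)⁻¹ * (n : ℝ)⁻¹ * ⟪a i, a j⟫ * ((p i)⁻¹ - 1) else 0) := by
      intro j
      by_cases h : i = j
      · subst h; simp; ring
      · simp [h, Ne.symm h]
    rw [Finset.sum_congr rfl (fun j _ => hterm j), Finset.sum_add_distrib,
      Finset.sum_ite_eq' Finset.univ i _, if_pos (Finset.mem_univ i),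
      real_inner_self_eq_norm_sq]
  have hgradF : gradient F x = (n : ℝ)⁻¹ • ∑ i, a i := by
    have hFe : F = fun y => (n : ℝ)⁻¹ * ∑ i, f i y := funext hF
    have h1 : HasFDerivAt (fun y => ∑ i, f i y)
        (∑ i, (InnerProductSpace.toDual ℝ (EuclideanSpace ℝ (Fin d)) (a i))) x :=
      HasFDerivAt.fun_sum (fun i _ => (hdiff i x).hasGradientAt.hasFDerivAt)
    have h2 : HasFDerivAt F
        ((n : ℝ)⁻¹ • ∑ i, (InnerProductSpace.toDual ℝ (EuclideanSpace ℝ (Fin d)) (a i))) x := by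
      rw [hFe]
      exact h1.const_mul ((n : ℝ)⁻¹)
    have h3 : HasGradientAt F ((n : ℝ)⁻¹ • ∑ i, a i) x := by
      rw [hasGradientAt_iff_hasFDerivAt, _root_.map_smul, map_sum]
      exact h2
    exact h3.gradient
  have hGsq : (∑ i, ∑ j, (n : ℝ)⁻¹ * (n : ℝ)⁻¹ * ⟪a i, a j⟫) = ‖gradient F x‖ ^ 2 := by
    rw [hgradF, ← real_inner_self_eq_norm_sq]
    simp only [real_inner_smul_left, real_inner_smul_right, sum_inner, inner_sum,
      Finset.mul_sum]
    exact Finset.sum_congr rfl fun i _ => Finset.sum_congr rfl fun j _ => by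
      rw [real_inner_comm (a j) (a i)]; ring
  have hterm2 : ∀ i, (n : ℝ)⁻¹ * (n : ℝ)⁻¹ * ‖a i‖ ^ 2 * ((p i)⁻¹ - 1)
      ≤ 2 * (n : ℝ)⁻¹ * A * (f i x - finf i) := by
    intro i
    have hgb : ‖a i‖ ^ 2 ≤ 2 * L i * (f i x - finf i) :=
      grad_sq_le_aux (f i) (L i) (finf i) (hL i) (hdiff i) (hlip i) (hbound i) x
    have hcoef : (1 - p i) * L i / (p i * n) ≤ A := by
      rw [hA]
      exact Finset.le_sup' (fun i : Fin n => (1 - p i) * L i / (p i * (n : ℝ))) (Finset.mem_univ i)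
    have ht0 : 0 ≤ f i x - finf i := sub_nonneg.2 (hbound i x)
    have hp0 : (0 : ℝ) ≤ (p i)⁻¹ - 1 := by
      have he : (p i)⁻¹ - 1 = (1 - p i) / p i := by
        rw [sub_div, div_self (hp i).ne', inv_eq_one_div]
      rw [he]
      exact div_nonneg (by linarith [hp1 i]) (hp i).le
    calc (n : ℝ)⁻¹ * (n : ℝ)⁻¹ * ‖a i‖ ^ 2 * ((p i)⁻¹ - 1)
        ≤ (n : ℝ)⁻¹ * (n : ℝ)⁻¹ * (2 * L i * (f i x - finf i)) * ((p i)⁻¹ - 1) := by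
          have hnn : (0 : ℝ) ≤ (n : ℝ)⁻¹ * (n : ℝ)⁻¹ := by positivity
          exact mul_le_mul_of_nonneg_right (mul_le_mul_of_nonneg_left hgb hnn) hp0
      _ = 2 * (n : ℝ)⁻¹ * ((1 - p i) * L i / (p i * n)) * (f i x - finf i) := by
          field_simp [(hp i).ne', hn0]
      _ ≤ 2 * (n : ℝ)⁻¹ * A * (f i x - finf i) := by
          apply mul_le_mul_of_nonneg_right _ ht0
          apply mul_le_mul_of_nonneg_left hcoef (by positivity)
  have hsum : ∑ i, (2 * (n : ℝ)⁻¹ * A * (f i x - finf i))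
      = 2 * A * (F x - fstar) + 2 * A * Δ := by
    have h1 : ∑ i, (2 * (n : ℝ)⁻¹ * A * (f i x - finf i))
        = 2 * A * ((n : ℝ)⁻¹ * ∑ i, (f i x - finf i)) := by
      rw [Finset.mul_sum, Finset.mul_sum]
      exact Finset.sum_congr rfl fun i _ => by ring
    rw [h1, hF x, hΔ]
    rw [Finset.sum_sub_distrib, Finset.sum_sub_distrib, Finset.sum_const,
      Finset.card_univ, Fintype.card_fin, nsmul_eq_mul]
    field_simp
    ring
  have hle : ∑ i, (n : ℝ)⁻¹ * (n : ℝ)⁻¹ * ‖a i‖ ^ 2 * ((p i)⁻¹ - 1)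
      ≤ 2 * A * (F x - fstar) + 2 * A * Δ := by
    calc ∑ i, (n : ℝ)⁻¹ * (n : ℝ)⁻¹ * ‖a i‖ ^ 2 * ((p i)⁻¹ - 1)
        ≤ ∑ i, (2 * (n : ℝ)⁻¹ * A * (f i x - finf i)) :=
          Finset.sum_le_sum fun i _ => hterm2 i
      _ = 2 * A * (F x - fstar) + 2 * A * Δ := hsum
  rw [hB, hC, one_mul]
  have hfinal : (∫ ω, ‖(n : ℝ)⁻¹ • ∑ i, v i ω • a i‖ ^ 2)
      = ‖gradient F x‖ ^ 2 + ∑ i, (n : ℝ)⁻¹ * (n : ℝ)⁻¹ * ‖a i‖ ^ 2 * ((p i)⁻¹ - 1) := by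
    rw [hintegral, hsplit, hGsq]
  linarith [hfinal]
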